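/- Let φ_N:Λ_N→ℝ be the unique solution of the traffic equation φ_N(x)(∑_{y∈Λ_N}p(y−x)+κN^{−θ}(r_N^+(x/N)+r_N^−(x/N))) = ∑_{y∈Λ_N}φ_N(y)p(y−x)+κN^{−θ}(φ_β r_N^+(x/N)+φ_α r_N^−(x/N)). Then for every x∈Λ_N, φ_N(x)+φ_N(N−x) = φ_α+φ_β. -/
import Mathlib

/-- Any solution `φ_N : Λ_N → ℝ` of the traffic equation satisfies the
symmetry `φ_N(x) + φ_N(N − x) = φ_α + φ_β` for every `x ∈ Λ_N`. -/
theorem traffic_solution_symmetry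
    (γ cγ : ℝ) (hγ0 : 0 < γ) (hγ2 : γ < 2)
    (hc : cγ = 2 / ∑' n : ℕ, ((n : ℝ) + 1) ^ (-(γ + 1)))
    (κ θ : ℝ) (hκ : 0 < κ) (N : ℕ) (hN : 2 ≤ N)
    (p : ℤ → ℝ) (hp0 : p 0 = 0)
    (hp : ∀ z : ℤ, z ≠ 0 → p z = cγ / |(z : ℝ)| ^ (1 + γ))
    (φα φβ : ℝ) (hφα : 0 < φα) (hφβ : 0 < φβ)
    (φN : ℤ → ℝ)
    (traffic : ∀ x ∈ Finset.Icc (1 : ℤ) ((N : ℤ) - 1),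
      φN x * ((∑ y ∈ Finset.Icc (1 : ℤ) ((N : ℤ) - 1), p (y - x))
          + κ * (N : ℝ) ^ (-θ) *
            ((∑' k : ℕ, p ((N : ℤ) + (k : ℤ) - x)) + ∑' k : ℕ, p (-(k : ℤ) - x))) =
        (∑ y ∈ Finset.Icc (1 : ℤ) ((N : ℤ) - 1), φN y * p (y - x))
          + κ * (N : ℝ) ^ (-θ) *
            (φβ * (∑' k : ℕ, p ((N : ℤ) + (k : ℤ) - x))
              + φα * ∑' k : ℕ, p (-(k : ℤ) - x))) :
    ∀ x ∈ Finset.Icc (1 : ℤ) ((N : ℤ) - 1), φN x + φN ((N : ℤ) - x) = φα + φβ := by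
  have hN2 : (2:ℤ) ≤ (N:ℤ) := by exact_mod_cast hN
  -- positivity of cγ
  have hsum0 : Summable (fun n : ℕ => ((n:ℝ)+1) ^ (-(γ+1))) := by
    have h := Real.summable_nat_rpow (p := -(γ+1)) |>.mpr (by linarith)
    refine ((summable_nat_add_iff 1).mpr h).congr fun n => ?_
    push_cast
    ring_nf
  have hcγ : 0 < cγ := by
    rw [hc]
    apply div_pos two_pos
    refine Summable.tsum_pos hsum0 (fun n => Real.rpow_nonneg (by positivity) _) 0 ?_
    apply Real.rpow_pos_of_pos
    norm_num
  have hpnn : ∀ z : ℤ, 0 ≤ p z := by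
    intro z
    rcases eq_or_ne z 0 with h | h
    · simp [h, hp0]
    · rw [hp z h]
      exact div_nonneg hcγ.le (Real.rpow_nonneg (abs_nonneg _) _)
  have hppos : ∀ z : ℤ, z ≠ 0 → 0 < p z := by
    intro z h
    rw [hp z h]
    apply div_pos hcγ
    apply Real.rpow_pos_of_pos
    exact abs_pos.mpr (Int.cast_ne_zero.mpr h)
  have hpsymm : ∀ z : ℤ, p (-z) = p z := by
    intro z
    rcases eq_or_ne z 0 with h | h
    · simp [h]
    · rw [hp z h, hp (-z) (neg_ne_zero.mpr h)]
      push_cast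
      rw [abs_neg]
  -- reflection of the lattice
  have hreflmem : ∀ y ∈ Finset.Icc (1:ℤ) ((N:ℤ)-1), (N:ℤ) - y ∈ Finset.Icc (1:ℤ) ((N:ℤ)-1) := by
    intro y hy
    rw [Finset.mem_Icc] at hy ⊢
    omega
  have hsumrefl : ∀ f : ℤ → ℝ,
      ∑ y ∈ Finset.Icc (1:ℤ) ((N:ℤ)-1), f y
        = ∑ y ∈ Finset.Icc (1:ℤ) ((N:ℤ)-1), f ((N:ℤ) - y) := by
    intro f
    refine Finset.sum_nbij' (i := fun y => (N:ℤ) - y) (j := fun y => (N:ℤ) - y)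
      hreflmem hreflmem (fun a _ => by ring) (fun a _ => by ring) (fun a _ => by norm_num)
  -- summability and positivity of the right boundary rate
  have hAsummable : ∀ x ∈ Finset.Icc (1:ℤ) ((N:ℤ)-1),
      Summable (fun k : ℕ => p ((N:ℤ) + (k:ℤ) - x)) := by
    intro x hx
    rw [Finset.mem_Icc] at hx
    have hbase : Summable (fun k : ℕ => cγ / ((k:ℝ)+1) ^ (1+γ)) := by
      have h1 : Summable (fun k : ℕ => ((k:ℝ)+1) ^ (-(1+γ))) := by
        have h := Real.summable_nat_rpow (p := -(1+γ)) |>.mpr (by linarith)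
        refine ((summable_nat_add_iff 1).mpr h).congr fun n => ?_
        push_cast
        ring_nf
      refine (h1.mul_left cγ).congr fun k => ?_
      rw [Real.rpow_neg (by positivity)]
      ring
    refine Summable.of_nonneg_of_le (fun k => hpnn _) (fun k => ?_) hbase
    have hne : (N:ℤ) + (k:ℤ) - x ≠ 0 := by omega
    rw [hp _ hne]
    have hzge : ((k:ℝ)+1) ≤ |(((N:ℤ) + (k:ℤ) - x : ℤ) : ℝ)| := by
      have h1 : (k:ℤ) + 1 ≤ (N:ℤ) + (k:ℤ) - x := by omega
      have h2 : ((k:ℝ)+1) ≤ (((N:ℤ) + (k:ℤ) - x : ℤ) : ℝ) := by exact_mod_cast h1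
      have h3 : (0:ℝ) ≤ (((N:ℤ) + (k:ℤ) - x : ℤ) : ℝ) := by
        exact_mod_cast (show (0:ℤ) ≤ (N:ℤ) + (k:ℤ) - x by omega)
      rw [abs_of_nonneg h3]
      exact h2
    have h4 : ((k:ℝ)+1) ^ (1+γ) ≤ |(((N:ℤ) + (k:ℤ) - x : ℤ) : ℝ)| ^ (1+γ) :=
      Real.rpow_le_rpow (by positivity) hzge (by linarith)
    exact div_le_div_of_nonneg_left hcγ.le (by positivity) h4
  have hApos : ∀ x ∈ Finset.Icc (1:ℤ) ((N:ℤ)-1),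
      0 < ∑' k : ℕ, p ((N:ℤ) + (k:ℤ) - x) := by
    intro x hx
    have hs := hAsummable x hx
    rw [Finset.mem_Icc] at hx
    refine Summable.tsum_pos hs (fun k => hpnn _) 0 (hppos _ ?_)
    push_cast
    omega
  have hBnn : ∀ x : ℤ, 0 ≤ ∑' k : ℕ, p (-(k:ℤ) - x) :=
    fun x => tsum_nonneg fun k => hpnn _
  -- key equation for g y = φN y + φN (N - y) - (φα + φβ)
  have hkey : ∀ x ∈ Finset.Icc (1:ℤ) ((N:ℤ)-1),
      (φN x + φN ((N:ℤ) - x) - (φα + φβ)) *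
        ((∑ y ∈ Finset.Icc (1:ℤ) ((N:ℤ)-1), p (y - x))
          + κ * (N : ℝ) ^ (-θ) *
            ((∑' k : ℕ, p ((N:ℤ) + (k:ℤ) - x)) + ∑' k : ℕ, p (-(k:ℤ) - x)))
        = ∑ y ∈ Finset.Icc (1:ℤ) ((N:ℤ)-1),
            (φN y + φN ((N:ℤ) - y) - (φα + φβ)) * p (y - x) := by
    intro x hx
    have t1 := traffic x hx
    have t2 := traffic ((N:ℤ) - x) (hreflmem x hx)
    have e1 : ∑ y ∈ Finset.Icc (1:ℤ) ((N:ℤ)-1), p (y - ((N:ℤ) - x))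
        = ∑ y ∈ Finset.Icc (1:ℤ) ((N:ℤ)-1), p (y - x) := by
      rw [hsumrefl (fun y => p (y - ((N:ℤ) - x)))]
      refine Finset.sum_congr rfl fun y _ => ?_
      have h1 : (N:ℤ) - y - ((N:ℤ) - x) = -(y - x) := by ring
      rw [h1, hpsymm]
    have e2 : ∑ y ∈ Finset.Icc (1:ℤ) ((N:ℤ)-1), φN y * p (y - ((N:ℤ) - x))
        = ∑ y ∈ Finset.Icc (1:ℤ) ((N:ℤ)-1), φN ((N:ℤ) - y) * p (y - x) := by
      rw [hsumrefl (fun y => φN y * p (y - ((N:ℤ) - x)))]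
      refine Finset.sum_congr rfl fun y _ => ?_
      have h1 : (N:ℤ) - y - ((N:ℤ) - x) = -(y - x) := by ring
      simp only [h1, hpsymm]
    have e3 : (∑' k : ℕ, p ((N:ℤ) + (k:ℤ) - ((N:ℤ) - x)))
        = ∑' k : ℕ, p (-(k:ℤ) - x) := by
      refine tsum_congr fun k => ?_
      have h1 : (N:ℤ) + (k:ℤ) - ((N:ℤ) - x) = -(-(k:ℤ) - x) := by ring
      rw [h1, hpsymm]
    have e4 : (∑' k : ℕ, p (-(k:ℤ) - ((N:ℤ) - x)))
        = ∑' k : ℕ, p ((N:ℤ) + (k:ℤ) - x) := by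
      refine tsum_congr fun k => ?_
      have h1 : -(k:ℤ) - ((N:ℤ) - x) = -((N:ℤ) + (k:ℤ) - x) := by ring
      rw [h1, hpsymm]
    rw [e1, e2, e3, e4] at t2
    have hsplit : ∑ y ∈ Finset.Icc (1:ℤ) ((N:ℤ)-1),
          (φN y + φN ((N:ℤ) - y) - (φα + φβ)) * p (y - x)
        = (∑ y ∈ Finset.Icc (1:ℤ) ((N:ℤ)-1), φN y * p (y - x))
          + (∑ y ∈ Finset.Icc (1:ℤ) ((N:ℤ)-1), φN ((N:ℤ) - y) * p (y - x))
          - (φα + φβ) * ∑ y ∈ Finset.Icc (1:ℤ) ((N:ℤ)-1), p (y - x) := by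
      rw [Finset.mul_sum, ← Finset.sum_add_distrib, ← Finset.sum_sub_distrib]
      exact Finset.sum_congr rfl fun y _ => by ring
    rw [hsplit]
    linear_combination t1 + t2
  -- maximum principle
  have hΛne : (Finset.Icc (1:ℤ) ((N:ℤ)-1)).Nonempty := ⟨1, by rw [Finset.mem_Icc]; omega⟩
  set g : ℤ → ℝ := fun y => φN y + φN ((N:ℤ) - y) - (φα + φβ) with hg
  have hRpos : ∀ x ∈ Finset.Icc (1:ℤ) ((N:ℤ)-1),
      0 < κ * (N : ℝ) ^ (-θ) *
        ((∑' k : ℕ, p ((N:ℤ) + (k:ℤ) - x)) + ∑' k : ℕ, p (-(k:ℤ) - x)) := by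
    intro x hx
    have hNpos : (0:ℝ) < (N:ℝ) := by exact_mod_cast (show (0:ℕ) < N by omega)
    have h1 : 0 < κ * (N : ℝ) ^ (-θ) := mul_pos hκ (Real.rpow_pos_of_pos hNpos _)
    have h2 := hApos x hx
    have h3 := hBnn x
    nlinarith
  -- max point
  obtain ⟨x0, hx0Λ, hmax⟩ := Finset.exists_max_image (Finset.Icc (1:ℤ) ((N:ℤ)-1)) g hΛne
  obtain ⟨x1, hx1Λ, hmin⟩ := Finset.exists_min_image (Finset.Icc (1:ℤ) ((N:ℤ)-1)) g hΛne
  have hles : ∀ x ∈ Finset.Icc (1:ℤ) ((N:ℤ)-1), (∀ y ∈ Finset.Icc (1:ℤ) ((N:ℤ)-1), g y ≤ g x) → g x ≤ 0 := by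
    intro x hx hmx
    have hk := hkey x hx
    have hle : ∑ y ∈ Finset.Icc (1:ℤ) ((N:ℤ)-1), g y * p (y - x)
        ≤ ∑ y ∈ Finset.Icc (1:ℤ) ((N:ℤ)-1), g x * p (y - x) :=
      Finset.sum_le_sum fun y hy => mul_le_mul_of_nonneg_right (hmx y hy) (hpnn _)
    rw [← Finset.mul_sum] at hle
    have hR := hRpos x hx
    by_contra hgt
    push_neg at hgt
    simp only [hg] at hle hgt
    nlinarith [mul_pos hgt hR]
  have hges : ∀ x ∈ Finset.Icc (1:ℤ) ((N:ℤ)-1), (∀ y ∈ Finset.Icc (1:ℤ) ((N:ℤ)-1), g x ≤ g y) → 0 ≤ g x := by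
    intro x hx hmx
    have hk := hkey x hx
    have hle : ∑ y ∈ Finset.Icc (1:ℤ) ((N:ℤ)-1), g x * p (y - x)
        ≤ ∑ y ∈ Finset.Icc (1:ℤ) ((N:ℤ)-1), g y * p (y - x) :=
      Finset.sum_le_sum fun y hy => mul_le_mul_of_nonneg_right (hmx y hy) (hpnn _)
    rw [← Finset.mul_sum] at hle
    have hR := hRpos x hx
    by_contra hgt
    push_neg at hgt
    simp only [hg] at hle hgt
    nlinarith [mul_pos (neg_pos.mpr hgt) hR]
  intro x hx
  have h1 : g x ≤ 0 := le_trans (hmax x hx) (hles x0 hx0Λ hmax)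
  have h2 : 0 ≤ g x := le_trans (hges x1 hx1Λ hmin) (hmin x hx)
  have : g x = 0 := le_antisymm h1 h2
  simp only [hg] at this
  linarith
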